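/- arXiv:2506.02897 — 3 statements merged into one kernel-verified Lean document; each statement's English description precedes it below -/
import Mathlib

section
/- Let η, c, L, M > 0 and ℓ* ∈ ℝ. Let ℓ : ℕ → ℝ and g : ℕ → ℝ be sequences with ℓ(t) ≥ ℓ* and g(t) ≥ 0 for all t, satisfying ℓ(t+1) ≤ ℓ(t) − η c g(t) + L η² M / 2 for all t ∈ ℕ. Then limsup_{T→∞} (1/T) Σ_{t=0}^{T−1} g(t) ≤ L η M / (2c). -/
open Filter

/-- Asymptotic conclusion of Proposition A3: under the per-round
descent inequality `ℓ(t+1) ≤ ℓ(t) − ηc g(t) + Lη²M/2` with `ℓ ≥ ℓ*` and `g ≥ 0`,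
the time averages of `g` satisfy `limsup_{T→∞} (1/T) Σ_{t<T} g(t) ≤ LηM/(2c)`. -/
theorem time_average_limsup_bound
    (η c L M : ℝ) (hη : 0 < η) (hc : 0 < c) (hL : 0 < L) (hM : 0 < M)
    (lstar : ℝ) (ℓ g : ℕ → ℝ)
    (hlb : ∀ t, lstar ≤ ℓ t) (hg : ∀ t, 0 ≤ g t)
    (hdesc : ∀ t, ℓ (t + 1) ≤ ℓ t - η * c * g t + L * η ^ 2 * M / 2) :
    limsup (fun T : ℕ => (1 / (T : ℝ)) * ∑ t ∈ Finset.range T, g t) atTop ≤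
      L * η * M / (2 * c) := by
  set K : ℝ := L * η * M / (2 * c) with hK
  have hηc : 0 < η * c := mul_pos hη hc
  -- telescoping sum bound
  have hsum : ∀ T : ℕ, η * c * ∑ t ∈ Finset.range T, g t ≤
      ℓ 0 - ℓ T + T * (L * η ^ 2 * M / 2) := by
    intro T
    induction T with
    | zero => simp
    | succ n ih =>
      rw [Finset.sum_range_succ]
      have := hdesc n
      push_cast
      nlinarith [ih, this]
  -- pointwise bound for T ≥ 1
  have hpt : ∀ᶠ T : ℕ in atTop,
      (1 / (T : ℝ)) * ∑ t ∈ Finset.range T, g t ≤ (ℓ 0 - lstar) / (η * c) / T + K := by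
    filter_upwards [eventually_ge_atTop 1] with T hT
    have hT0 : (0 : ℝ) < T := by exact_mod_cast hT
    have h1 := hsum T
    have h2 : ℓ 0 - ℓ T ≤ ℓ 0 - lstar := by linarith [hlb T]
    have hK2 : L * η ^ 2 * M / 2 = η * c * K := by
      rw [hK]; field_simp
    have key : η * c * ∑ t ∈ Finset.range T, g t ≤ (ℓ 0 - lstar) + T * (η * c * K) := by
      nlinarith [h1, h2, hK2]
    calc (1 / (T : ℝ)) * ∑ t ∈ Finset.range T, g t
        = (η * c * ∑ t ∈ Finset.range T, g t) / (η * c * T) := by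
          field_simp
      _ ≤ ((ℓ 0 - lstar) + T * (η * c * K)) / (η * c * T) :=
          div_le_div_of_nonneg_right key (by positivity)
      _ = (ℓ 0 - lstar) / (η * c) / T + K := by
          field_simp
  -- the RHS tends to K
  have htend : Tendsto (fun T : ℕ => (ℓ 0 - lstar) / (η * c) / T + K) atTop (nhds K) := by
    have : Tendsto (fun T : ℕ => (ℓ 0 - lstar) / (η * c) / T) atTop (nhds 0) :=
      tendsto_const_nhds.div_atTop tendsto_natCast_atTop_atTop
    simpa using this.add tendsto_const_nhds
  calc limsup (fun T : ℕ => (1 / (T : ℝ)) * ∑ t ∈ Finset.range T, g t) atTop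
      ≤ limsup (fun T : ℕ => (ℓ 0 - lstar) / (η * c) / T + K) atTop := by
        have hbelow : IsBoundedUnder (· ≥ ·) atTop
            (fun T : ℕ => (1 / (T : ℝ)) * ∑ t ∈ Finset.range T, g t) :=
          ⟨0, by
            simp only [eventually_map]
            exact Eventually.of_forall fun T => mul_nonneg (by positivity)
              (Finset.sum_nonneg fun t _ => hg t)⟩
        exact limsup_le_limsup hpt hbelow.isCoboundedUnder_le htend.isBoundedUnder_le
    _ = K := htend.limsup_eq
end

section
/- Let f : ℝ^D → ℝ be differentiable with L-Lipschitz gradient (L > 0) and bounded below by f* ∈ ℝ, and let c, M, η > 0. Let θ : ℕ → ℝ^D and g : ℕ → ℝ^D be sequences with θ(t+1) = θ(t) − η g(t), ⟨g(t), ∇f(θ(t))⟩ ≥ c‖∇f(θ(t))‖², and ‖g(t)‖² ≤ M for all t ∈ ℕ. Then for every positive integer T, (1/T) Σ_{t=0}^{T−1} ‖∇f(θ(t))‖² ≤ (f(θ(0)) − f*)/(η c T) + L η M / (2c); in particular limsup_{T→∞} (1/T) Σ_{t=0}^{T−1} ‖∇f(θ(t))‖² ≤ L η M / (2c). -/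
open Filter
open scoped RealInnerProductSpace

lemma descent_lemma {E : Type*} [NormedAddCommGroup E] [InnerProductSpace ℝ E]
    [CompleteSpace E] (f : E → ℝ) (L : ℝ)
    (hdiff : Differentiable ℝ f)
    (hlip : ∀ x y, ‖gradient f x - gradient f y‖ ≤ L * ‖x - y‖) (x v : E) :
    f (x + v) ≤ f x + ⟪gradient f x, v⟫ + L / 2 * ‖v‖ ^ 2 := by
  set φ : ℝ → ℝ := fun s => f (x + s • v) with hφdef
  have hφ : ∀ s : ℝ, HasDerivAt φ ⟪gradient f (x + s • v), v⟫ s := by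
    intro s
    have h1 : HasDerivAt (fun s : ℝ => x + s • v) v s := by
      simpa using ((hasDerivAt_id s).smul_const v).const_add x
    have h2 := ((hdiff (x + s • v)).hasGradientAt.hasFDerivAt).comp_hasDerivAt s h1
    have h3 : HasDerivAt φ ((InnerProductSpace.toDual ℝ E) (gradient f (x + s • v)) v) s := h2
    simpa [InnerProductSpace.toDual_apply_apply] using h3
  set ψ : ℝ → ℝ := fun s =>
    f x + s * ⟪gradient f x, v⟫ + L * ‖v‖ ^ 2 * s ^ 2 / 2 - φ s with hψdef
  have hψ : ∀ s : ℝ, HasDerivAt ψ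
      (⟪gradient f x, v⟫ + L * ‖v‖ ^ 2 * s - ⟪gradient f (x + s • v), v⟫) s := by
    intro s
    have h1 : HasDerivAt (fun s : ℝ =>
        f x + s * ⟪gradient f x, v⟫ + L * ‖v‖ ^ 2 * s ^ 2 / 2)
        (⟪gradient f x, v⟫ + L * ‖v‖ ^ 2 * s) s := by
      have : HasDerivAt (fun s : ℝ => f x + s * ⟪gradient f x, v⟫ + L * ‖v‖ ^ 2 * s ^ 2 / 2) _ s :=
        (((hasDerivAt_id s).mul_const ⟪gradient f x, v⟫).const_add (f x)).add
        ((((hasDerivAt_pow 2 s).const_mul (L * ‖v‖ ^ 2)).div_const 2))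
      convert this using 1
      ring
    exact h1.sub (hφ s)
  have hψdiff : Differentiable ℝ ψ := fun s => (hψ s).differentiableAt
  have hmono : MonotoneOn ψ (Set.Icc (0:ℝ) 1) := by
    apply monotoneOn_of_deriv_nonneg (convex_Icc 0 1)
      hψdiff.continuous.continuousOn hψdiff.differentiableOn
    intro s hs
    rw [interior_Icc] at hs
    rw [(hψ s).deriv]
    have key : ⟪gradient f (x + s • v), v⟫ - ⟪gradient f x, v⟫ ≤ L * ‖v‖ ^ 2 * s := by
      have h1 : ⟪gradient f (x + s • v) - gradient f x, v⟫
          ≤ ‖gradient f (x + s • v) - gradient f x‖ * ‖v‖ := real_inner_le_norm _ _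
      have h2 : ‖gradient f (x + s • v) - gradient f x‖ ≤ L * (s * ‖v‖) := by
        have := hlip (x + s • v) x
        simpa [norm_smul, abs_of_pos hs.1] using this
      have h3 : ‖gradient f (x + s • v) - gradient f x‖ * ‖v‖ ≤ L * (s * ‖v‖) * ‖v‖ :=
        mul_le_mul_of_nonneg_right h2 (norm_nonneg v)
      calc ⟪gradient f (x + s • v), v⟫ - ⟪gradient f x, v⟫
          = ⟪gradient f (x + s • v) - gradient f x, v⟫ := by rw [inner_sub_left]
        _ ≤ L * (s * ‖v‖) * ‖v‖ := h1.trans h3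
        _ = L * ‖v‖ ^ 2 * s := by ring
    linarith
  have h01 := hmono (Set.left_mem_Icc.2 one_pos.le) (Set.right_mem_Icc.2 one_pos.le) one_pos.le
  have hφ0 : φ 0 = f x := by simp [hφdef]
  have hφ1 : φ 1 = f (x + v) := by simp [hφdef]
  simp only [hψdef, hφ0, hφ1] at h01
  nlinarith [h01]

/-- Deterministic form of Proposition A3 (convergence of
FedCVR-Bolt): for `f` differentiable with `L`-Lipschitz gradient and bounded below
by `f*`, and iterates `θ(t+1) = θ(t) − η g(t)` with aligned, bounded update
directions, the time-averaged squared gradient norms satisfy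
`(1/T) Σ_{t<T} ‖∇f(θ(t))‖² ≤ (f(θ(0)) − f*)/(ηcT) + LηM/(2c)` for every `T > 0`,
and in particular `limsup_{T→∞} (1/T) Σ_{t<T} ‖∇f(θ(t))‖² ≤ LηM/(2c)`. -/
theorem fedcvr_convergence
    (D : ℕ) (f : EuclideanSpace ℝ (Fin D) → ℝ)
    (L c M η : ℝ) (hL : 0 < L) (hc : 0 < c) (hM : 0 < M) (hη : 0 < η)
    (fstar : ℝ) (hbelow : ∀ x, fstar ≤ f x)
    (hdiff : Differentiable ℝ f)
    (hlip : ∀ x y, ‖gradient f x - gradient f y‖ ≤ L * ‖x - y‖)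
    (θ g : ℕ → EuclideanSpace ℝ (Fin D))
    (hupd : ∀ t, θ (t + 1) = θ t - η • g t)
    (halign : ∀ t, c * ‖gradient f (θ t)‖ ^ 2 ≤ ⟪g t, gradient f (θ t)⟫)
    (hbound : ∀ t, ‖g t‖ ^ 2 ≤ M) :
    (∀ T : ℕ, 0 < T →
      (1 / (T : ℝ)) * ∑ t ∈ Finset.range T, ‖gradient f (θ t)‖ ^ 2 ≤
        (f (θ 0) - fstar) / (η * c * T) + L * η * M / (2 * c)) ∧
    limsup (fun T : ℕ =>
        (1 / (T : ℝ)) * ∑ t ∈ Finset.range T, ‖gradient f (θ t)‖ ^ 2) atTop ≤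
      L * η * M / (2 * c) := by
  -- per-step descent
  have step : ∀ t, f (θ (t + 1)) ≤ f (θ t) - η * c * ‖gradient f (θ t)‖ ^ 2
      + L * η ^ 2 * M / 2 := by
    intro t
    have hd := descent_lemma f L hdiff hlip (θ t) (-(η • g t))
    have heq : θ t + -(η • g t) = θ (t + 1) := by rw [hupd t]; abel
    rw [heq] at hd
    have hinner : ⟪gradient f (θ t), -(η • g t)⟫
        = -(η * ⟪g t, gradient f (θ t)⟫) := by
      rw [inner_neg_right, real_inner_smul_right, real_inner_comm]
    have hnorm : ‖-(η • g t)‖ ^ 2 = η ^ 2 * ‖g t‖ ^ 2 := by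
      rw [norm_neg, norm_smul]
      simp [abs_of_pos hη, mul_pow]
    rw [hinner, hnorm] at hd
    have h1 := mul_le_mul_of_nonneg_left (halign t) hη.le
    have h2 := mul_le_mul_of_nonneg_left (hbound t) (by positivity : (0:ℝ) ≤ L / 2 * η ^ 2)
    nlinarith [h1, h2]
  -- telescoping sum
  have key : ∀ T : ℕ, η * c * ∑ t ∈ Finset.range T, ‖gradient f (θ t)‖ ^ 2
      ≤ f (θ 0) - f (θ T) + T * (L * η ^ 2 * M / 2) := by
    intro T
    induction T with
    | zero => simp
    | succ n ih =>
      rw [Finset.sum_range_succ]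
      have := step n
      push_cast
      nlinarith
  have hSnonneg : ∀ T : ℕ, (0:ℝ) ≤ ∑ t ∈ Finset.range T, ‖gradient f (θ t)‖ ^ 2 :=
    fun T => Finset.sum_nonneg fun t _ => by positivity
  have part1 : ∀ T : ℕ, 0 < T →
      (1 / (T : ℝ)) * ∑ t ∈ Finset.range T, ‖gradient f (θ t)‖ ^ 2 ≤
        (f (θ 0) - fstar) / (η * c * T) + L * η * M / (2 * c) := by
    intro T hT
    have hTpos : (0:ℝ) < T := Nat.cast_pos.2 hT
    have h1 : η * c * ∑ t ∈ Finset.range T, ‖gradient f (θ t)‖ ^ 2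
        ≤ f (θ 0) - fstar + T * (L * η ^ 2 * M / 2) := by
      have := key T
      have := hbelow (θ T)
      linarith
    rw [div_add_div _ _ (by positivity) (by positivity), one_div_mul_eq_div,
      div_le_div_iff₀ hTpos (by positivity)]
    ring_nf
    nlinarith [mul_le_mul_of_nonneg_left h1 (by positivity : (0:ℝ) ≤ 2 * c * (T:ℝ)), hTpos]
  refine ⟨part1, ?_⟩
  have hub : ∀ᶠ T : ℕ in atTop,
      (1 / (T : ℝ)) * ∑ t ∈ Finset.range T, ‖gradient f (θ t)‖ ^ 2 ≤
        (f (θ 0) - fstar) / (η * c) / T + L * η * M / (2 * c) := by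
    filter_upwards [eventually_gt_atTop 0] with T hT
    rw [div_div]
    exact part1 T hT
  have htend : Tendsto (fun T : ℕ => (f (θ 0) - fstar) / (η * c) / T
      + L * η * M / (2 * c)) atTop (nhds (L * η * M / (2 * c))) := by
    have h0 := tendsto_const_div_atTop_nhds_zero_nat ((f (θ 0) - fstar) / (η * c))
    simpa using h0.add tendsto_const_nhds
  calc limsup (fun T : ℕ =>
        (1 / (T : ℝ)) * ∑ t ∈ Finset.range T, ‖gradient f (θ t)‖ ^ 2) atTop
      ≤ limsup (fun T : ℕ => (f (θ 0) - fstar) / (η * c) / T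
          + L * η * M / (2 * c)) atTop := by
        refine limsup_le_limsup hub ?_ htend.isBoundedUnder_le
        exact (isBoundedUnder_of ⟨0, fun T => by positivity⟩ :
          IsBoundedUnder (· ≥ ·) atTop _).isCoboundedUnder_le
    _ = L * η * M / (2 * c) := htend.limsup_eq
end

section
/- Let (Ω, F, P) be a probability space, K a positive integer, X : Ω → ℝ^K a square-integrable random vector with E[X_i] = 0 for all i and positive definite covariance matrix C, α ∈ ℝ^K, and A a nonempty subset of {1,…,K}. Then Var(αᵀX) − E[(αᵀX − β̂ᵀX)²] = (Cα)_Aᵀ (C_{AA})^{-1} (Cα)_A, where β̂ ∈ ℝ^K is defined by β̂_A = (C_{AA})^{-1}(Cα)_A on coordinates in A and β̂_k = 0 for k ∉ A. -/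
open Matrix MeasureTheory ProbabilityTheory

/-- Probabilistic form of Proposition 2: for a zero-mean
square-integrable random vector `X` with positive definite covariance `C`, the
variance reduction on the global model `αᵀX` achieved by the best linear predictor
`β̂ᵀX` based on the coordinates in `A` (where `β̂_A = (C_AA)⁻¹(Cα)_A`, `β̂ = 0`
outside `A`) equals `(Cα)_Aᵀ (C_AA)⁻¹ (Cα)_A`. -/
theorem variance_reduction_prob
    {Ω : Type*} [MeasurableSpace Ω] (μ : Measure Ω) [IsProbabilityMeasure μ]
    (K : ℕ) (hK : 0 < K)
    (X : Fin K → Ω → ℝ)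
    (hX : ∀ k, MemLp (X k) 2 μ)
    (hmean : ∀ k, ∫ ω, X k ω ∂μ = 0)
    (C : Matrix (Fin K) (Fin K) ℝ)
    (hC : ∀ k j, C k j = ∫ ω, X k ω * X j ω ∂μ)
    (hPD : C.PosDef)
    (α : Fin K → ℝ) (A : Finset (Fin K)) (hA : A.Nonempty)
    (βhat : Fin K → ℝ)
    (hβhat : ∀ k : Fin K, βhat k =
      if h : k ∈ A then
        ((C.submatrix (fun i : {x // x ∈ A} => i.1) (fun j : {x // x ∈ A} => j.1))⁻¹ *ᵥ
          fun i : {x // x ∈ A} => (C *ᵥ α) i.1) ⟨k, h⟩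
      else 0) :
    variance (fun ω => ∑ k, α k * X k ω) μ -
        ∫ ω, ((∑ k, α k * X k ω) - ∑ k, βhat k * X k ω) ^ 2 ∂μ =
      (fun i : {x // x ∈ A} => (C *ᵥ α) i.1) ⬝ᵥ
        ((C.submatrix (fun i : {x // x ∈ A} => i.1) (fun j : {x // x ∈ A} => j.1))⁻¹ *ᵥ
          fun i : {x // x ∈ A} => (C *ᵥ α) i.1) := by
  classical
  set D : Matrix {x // x ∈ A} {x // x ∈ A} ℝ :=
    C.submatrix (fun i : {x // x ∈ A} => i.1) (fun j : {x // x ∈ A} => j.1) with hD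
  set v : {x // x ∈ A} → ℝ := fun i => (C *ᵥ α) i.1 with hv
  -- basic integrability
  have hXint : ∀ k, Integrable (X k) μ := fun k => (hX k).integrable one_le_two
  have hmul : ∀ k j, Integrable (fun ω => X k ω * X j ω) μ := by
    intro k j
    have : MemLp ((X k) • (X j)) 1 μ :=
      (hX j).smul (hX k) (hpqr := ⟨by simp [ENNReal.inv_two_add_inv_two]⟩)
    exact memLp_one_iff_integrable.mp this
  -- the key bilinear identity
  have key : ∀ u w : Fin K → ℝ,
      ∫ ω, (∑ k, u k * X k ω) * (∑ j, w j * X j ω) ∂μ = u ⬝ᵥ (C *ᵥ w) := by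
    intro u w
    have h1 : ∀ ω, (∑ k, u k * X k ω) * (∑ j, w j * X j ω)
        = ∑ k, ∑ j, u k * w j * (X k ω * X j ω) := by
      intro ω
      rw [Finset.sum_mul_sum]
      exact Finset.sum_congr rfl fun k _ => Finset.sum_congr rfl fun j _ => by ring
    calc ∫ ω, (∑ k, u k * X k ω) * (∑ j, w j * X j ω) ∂μ
        = ∫ ω, ∑ k, ∑ j, u k * w j * (X k ω * X j ω) ∂μ := by
          exact integral_congr_ae (Filter.Eventually.of_forall fun ω => h1 ω)
      _ = ∑ k, ∑ j, u k * w j * C k j := by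
          rw [integral_finset_sum _ fun k _ =>
            integrable_finset_sum _ fun j _ => (hmul k j).const_mul _]
          refine Finset.sum_congr rfl fun k _ => ?_
          rw [integral_finset_sum _ fun j _ => (hmul k j).const_mul _]
          refine Finset.sum_congr rfl fun j _ => ?_
          rw [integral_const_mul, hC]
      _ = u ⬝ᵥ (C *ᵥ w) := by
          simp only [dotProduct, mulVec, Finset.mul_sum]
          exact Finset.sum_congr rfl fun k _ => Finset.sum_congr rfl fun j _ => by ring
  -- symmetry of C
  have hCentry : ∀ k j, C k j = C j k := by
    intro k j; rw [hC, hC]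
    exact integral_congr_ae (Filter.Eventually.of_forall fun ω => mul_comm _ _)
  have hswap : ∀ u w : Fin K → ℝ, u ⬝ᵥ (C *ᵥ w) = w ⬝ᵥ (C *ᵥ u) := by
    intro u w
    simp only [dotProduct, mulVec, Finset.mul_sum]
    rw [Finset.sum_comm]
    exact Finset.sum_congr rfl fun j _ => Finset.sum_congr rfl fun k _ => by
      rw [hCentry j k]; ring
  -- restriction of dot products to A
  have hsupp : ∀ k ∉ A, βhat k = 0 := by
    intro k hk; rw [hβhat k, dif_neg hk]
  have hrestrict : ∀ (u z : Fin K → ℝ), (∀ k ∉ A, u k = 0) →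
      u ⬝ᵥ z = ∑ i : {x // x ∈ A}, u i.1 * z i.1 := by
    intro u z hu
    rw [Finset.sum_coe_sort A (fun k => u k * z k)]
    refine (Finset.sum_subset (Finset.subset_univ A) fun k _ hk => ?_).symm
    rw [hu k hk, zero_mul]
  have hrestrict2 : ∀ (u w : Fin K → ℝ), (∀ k ∉ A, u k = 0) → (∀ k ∉ A, w k = 0) →
      u ⬝ᵥ (C *ᵥ w) = (fun i : {x // x ∈ A} => u i.1) ⬝ᵥ (D *ᵥ fun i => w i.1) := by
    intro u w hu hw
    rw [hrestrict u _ hu]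
    refine Finset.sum_congr rfl fun i _ => ?_
    congr 1
    show (C *ᵥ w) i.1 = ∑ j : {x // x ∈ A}, D i j * w j.1
    simp only [mulVec, dotProduct, hD, submatrix_apply]
    rw [Finset.sum_coe_sort A (fun j => C i.1 j * w j)]
    refine (Finset.sum_subset (Finset.subset_univ A) fun k _ hk => ?_).symm
    rw [hw k hk, mul_zero]
  -- positive definiteness of D, invertibility
  have hDPD : D.PosDef := by
    refine PosDef.of_dotProduct_mulVec_pos ?_ ?_
    · show Dᴴ = D
      ext i j
      simp only [conjTranspose_apply, hD, submatrix_apply, star_trivial]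
      exact hCentry j.1 i.1
    · intro x hx
      set y : Fin K → ℝ := fun k => if h : k ∈ A then x ⟨k, h⟩ else 0 with hy
      have hysupp : ∀ k ∉ A, y k = 0 := fun k hk => dif_neg hk
      have hyne : y ≠ 0 := by
        intro h0
        apply hx
        funext i
        have := congrFun h0 i.1
        simpa [hy, dif_pos i.2] using this
      have := hPD.dotProduct_mulVec_pos hyne
      have heq : y ⬝ᵥ (C *ᵥ y) = x ⬝ᵥ (D *ᵥ x) := by
        rw [hrestrict2 y y hysupp hysupp]
        congr 1
        · funext i; simp [hy, dif_pos i.2]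
        · congr 1; funext i; simp [hy, dif_pos i.2]
      simpa [heq] using this
  have hDdet : IsUnit D.det := hDPD.det_pos.ne'.isUnit
  have hDinv : D * D⁻¹ = 1 := Matrix.mul_nonsing_inv D hDdet
  -- βhat restricted to A equals D⁻¹ *ᵥ v
  have hb : (fun i : {x // x ∈ A} => βhat i.1) = D⁻¹ *ᵥ v := by
    funext i
    rw [hβhat i.1, dif_pos i.2]
  -- the two scalar quantities
  have hs1 : βhat ⬝ᵥ (C *ᵥ α) = (D⁻¹ *ᵥ v) ⬝ᵥ v := by
    rw [hrestrict βhat _ hsupp]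
    have : ∀ i : {x // x ∈ A}, βhat i.1 * (C *ᵥ α) i.1 = (D⁻¹ *ᵥ v) i * v i := by
      intro i
      rw [congrFun hb i]
    simp only [this]
    rfl
  have hs2 : βhat ⬝ᵥ (C *ᵥ βhat) = (D⁻¹ *ᵥ v) ⬝ᵥ v := by
    rw [hrestrict2 βhat βhat hsupp hsupp, hb]
    rw [mulVec_mulVec, hDinv, one_mulVec]
  -- compute the variance term
  set f : Ω → ℝ := fun ω => ∑ k, α k * X k ω with hf
  have hmemf : MemLp f 2 μ := by
    have h := memLp_finset_sum' (μ := μ) Finset.univ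
      (f := fun (k : Fin K) (ω : Ω) => α k * X k ω) (fun k _ => (hX k).const_mul (α k))
    have he : (∑ k : Fin K, fun ω => α k * X k ω) = f := by
      funext ω; rw [Finset.sum_apply]
    rwa [he] at h
  have hEf : ∫ ω, f ω ∂μ = 0 := by
    rw [hf, integral_finset_sum _ fun k _ => (hXint k).const_mul _]
    simp [integral_const_mul, hmean]
  have hvar : variance f μ = α ⬝ᵥ (C *ᵥ α) := by
    have h2 : (∫ ω, f ω ^ 2 ∂μ) = α ⬝ᵥ (C *ᵥ α) := by
      rw [← key α α]
      refine integral_congr_ae (Filter.Eventually.of_forall fun ω => ?_)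
      simp [hf, sq]
    rw [variance_eq_sub hmemf]
    simp only [Pi.pow_apply]
    rw [h2, hEf]
    ring
  -- compute the error term
  have herr : ∫ ω, ((∑ k, α k * X k ω) - ∑ k, βhat k * X k ω) ^ 2 ∂μ
      = (fun k => α k - βhat k) ⬝ᵥ (C *ᵥ fun k => α k - βhat k) := by
    rw [← key]
    refine integral_congr_ae (Filter.Eventually.of_forall fun ω => ?_)
    dsimp only
    have h3 : (∑ k, α k * X k ω) - ∑ k, βhat k * X k ω
        = ∑ k, (α k - βhat k) * X k ω := by
      rw [← Finset.sum_sub_distrib]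
      exact Finset.sum_congr rfl fun k _ => by ring
    rw [h3, sq]
  -- final algebra
  have hexp : (fun k => α k - βhat k) ⬝ᵥ (C *ᵥ fun k => α k - βhat k)
      = α ⬝ᵥ (C *ᵥ α) - α ⬝ᵥ (C *ᵥ βhat) - βhat ⬝ᵥ (C *ᵥ α) + βhat ⬝ᵥ (C *ᵥ βhat) := by
    have h1 : (fun k => α k - βhat k) = α - βhat := rfl
    rw [h1, sub_dotProduct, mulVec_sub, dotProduct_sub, dotProduct_sub]
    ring
  rw [hvar, herr, hexp, hswap α βhat, hs1, hs2]
  rw [dotProduct_comm (D⁻¹ *ᵥ v) v]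
  ring
end
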